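/- Let A be a finite-dimensional Hopf algebra whose antipode S satisfies S² = id, with representation Π_φ on V and vector φ₀ ∈ V. Let T_r = {a : (id ⊗ Π_φ)(Δ(a))(1 ⊗ φ₀) = a ⊗ φ₀} and T_l = {a : (Π_φ ⊗ id)(Δ(a))(φ₀ ⊗ 1) = φ₀ ⊗ a}. Then S(T_l) = T_r and S(T_r) = T_l. -/

import Mathlib

open TensorProduct

/-- The linear map `a ↦ π a v` given a representation `π` and a fixed vector `v`. -/
noncomputable def actOn {A V : Type*} [Ring A] [HopfAlgebra ℂ A]
    [AddCommGroup V] [Module ℂ V] (π : A →ₐ[ℂ] Module.End ℂ V) (v : V) : A →ₗ[ℂ] V where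
  toFun a := π a v
  map_add' a b := by simp
  map_smul' c a := by simp

/-- The right residual symmetry algebra
`T_r = {a ∈ A : (id ⊗ Π_φ)(Δ(a))(1 ⊗ φ₀) = a ⊗ φ₀}`. -/
noncomputable def rightResidual {A V : Type*} [Ring A] [HopfAlgebra ℂ A]
    [AddCommGroup V] [Module ℂ V] (π : A →ₐ[ℂ] Module.End ℂ V) (φ₀ : V) : Set A :=
  {a : A | TensorProduct.map LinearMap.id (actOn π φ₀) (Coalgebra.comul a) = a ⊗ₜ[ℂ] φ₀}

/-- The left residual symmetry algebra
`T_l = {a ∈ A : (Π_φ ⊗ id)(Δ(a))(φ₀ ⊗ 1) = φ₀ ⊗ a}`. -/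
noncomputable def leftResidual {A V : Type*} [Ring A] [HopfAlgebra ℂ A]
    [AddCommGroup V] [Module ℂ V] (π : A →ₐ[ℂ] Module.End ℂ V) (φ₀ : V) : Set A :=
  {a : A | TensorProduct.map (actOn π φ₀) LinearMap.id (Coalgebra.comul a) = φ₀ ⊗ₜ[ℂ] a}

section Stmt4AuxSection

open Coalgebra HopfAlgebra

namespace Stmt4Aux

variable {A : Type*} [Ring A] [HopfAlgebra ℂ A]

lemma sum_counit_smul {a : A} (r : Coalgebra.Repr ℂ a (A × A)) :
    ∑ i ∈ r.index, counit (R := ℂ) (r.left i) • r.right i = a := by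
  have h := congrArg (TensorProduct.lid ℂ A) (Coalgebra.sum_counit_tmul_eq r)
  simp only [map_sum, TensorProduct.lid_tmul, one_smul] at h
  exact h

lemma sum_smul_counit {a : A} (r : Coalgebra.Repr ℂ a (A × A)) :
    ∑ i ∈ r.index, counit (R := ℂ) (r.right i) • r.left i = a := by
  have h := congrArg (TensorProduct.rid ℂ A) (Coalgebra.sum_tmul_counit_eq r)
  simp only [map_sum, TensorProduct.rid_tmul, one_smul] at h
  exact h

section Conv

variable {B : Type*} [Semiring B] [Algebra ℂ B]

/-- Convolution product on `Hom(A, B)`. -/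
noncomputable def conv (f g : A →ₗ[ℂ] B) : A →ₗ[ℂ] B :=
  LinearMap.mul' ℂ B ∘ₗ TensorProduct.map f g ∘ₗ Coalgebra.comul

/-- Convolution unit. -/
noncomputable def cunit : A →ₗ[ℂ] B :=
  Algebra.linearMap ℂ B ∘ₗ Coalgebra.counit

lemma cunit_apply (a : A) : (cunit (B := B)) a = algebraMap ℂ B (counit (R := ℂ) a) := rfl

lemma conv_repr (f g : A →ₗ[ℂ] B) {a : A} (r : Coalgebra.Repr ℂ a (A × A)) :
    conv f g a = ∑ i ∈ r.index, f (r.left i) * g (r.right i) := by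
  simp [conv, ← r.eq, map_sum]

lemma cunit_conv (f : A →ₗ[ℂ] B) : conv cunit f = f := by
  refine LinearMap.ext fun a => ?_
  rw [conv_repr _ _ (ℛ ℂ a)]
  simp_rw [cunit_apply, ← Algebra.smul_def, ← map_smul, ← map_sum, sum_counit_smul]

lemma conv_cunit (f : A →ₗ[ℂ] B) : conv f cunit = f := by
  refine LinearMap.ext fun a => ?_
  rw [conv_repr _ _ (ℛ ℂ a)]
  simp_rw [cunit_apply, ← Algebra.commutes, ← Algebra.smul_def, ← map_smul, ← map_sum,
    sum_smul_counit]

lemma conv_assoc (f g h : A →ₗ[ℂ] B) : conv (conv f g) h = conv f (conv g h) := by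
  refine LinearMap.ext fun a => ?_
  set r := ℛ ℂ a with hr
  set s : ∀ i, Coalgebra.Repr ℂ (r.left i) (A × A) := fun i => ℛ ℂ (r.left i) with hs
  set t : ∀ i, Coalgebra.Repr ℂ (r.right i) (A × A) := fun i => ℛ ℂ (r.right i) with ht
  have key := congrArg (⇑(LinearMap.mul' ℂ B ∘ₗ
    TensorProduct.map f (LinearMap.mul' ℂ B ∘ₗ TensorProduct.map g h)))
    (Coalgebra.sum_tmul_tmul_eq r s t)
  simp only [map_sum, LinearMap.coe_comp, Function.comp_apply, TensorProduct.map_tmul,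
    LinearMap.mul'_apply] at key
  rw [conv_repr _ _ r, conv_repr _ _ r]
  calc ∑ i ∈ r.index, conv f g (r.left i) * h (r.right i)
      = ∑ i ∈ r.index, ∑ j ∈ (s i).index,
          f ((s i).left j) * (g ((s i).right j) * h (r.right i)) := by
        refine Finset.sum_congr rfl fun i _ => ?_
        rw [conv_repr _ _ (s i), Finset.sum_mul]
        simp_rw [mul_assoc]
    _ = ∑ i ∈ r.index, ∑ j ∈ (t i).index,
          f (r.left i) * (g ((t i).left j) * h ((t i).right j)) := key
    _ = ∑ i ∈ r.index, f (r.left i) * conv g h (r.right i) := by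
        refine Finset.sum_congr rfl fun i _ => ?_
        rw [conv_repr _ _ (t i), Finset.mul_sum]

lemma eq_of_conv (f g h : A →ₗ[ℂ] B) (h1 : conv f g = cunit) (h2 : conv g h = cunit) :
    f = h := by
  calc f = conv f cunit := (conv_cunit f).symm
    _ = conv f (conv g h) := by rw [h2]
    _ = conv (conv f g) h := (conv_assoc f g h).symm
    _ = conv cunit h := by rw [h1]
    _ = h := cunit_conv h

end Conv

end Stmt4Aux

namespace Stmt4Aux

variable {A : Type*} [Ring A] [HopfAlgebra ℂ A]

/-- `a ↦ a ⊗ 1`. -/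
noncomputable def d₁ : A →ₗ[ℂ] A ⊗[ℂ] A := (TensorProduct.mk ℂ A A).flip 1
/-- `a ↦ 1 ⊗ a`. -/
noncomputable def d₂ : A →ₗ[ℂ] A ⊗[ℂ] A := TensorProduct.mk ℂ A A 1

@[simp] lemma d₁_apply (a : A) : (d₁ a : A ⊗[ℂ] A) = a ⊗ₜ[ℂ] 1 := rfl
@[simp] lemma d₂_apply (a : A) : (d₂ a : A ⊗[ℂ] A) = 1 ⊗ₜ[ℂ] a := rfl

/-- `τ ∘ (S ⊗ S) ∘ Δ`. -/
noncomputable def antipodeFlip : A →ₗ[ℂ] A ⊗[ℂ] A :=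
  (TensorProduct.comm ℂ A A).toLinearMap ∘ₗ
    TensorProduct.map (antipode (R := ℂ)) (antipode (R := ℂ)) ∘ₗ Coalgebra.comul

lemma antipodeFlip_repr {a : A} (r : Coalgebra.Repr ℂ a (A × A)) :
    antipodeFlip a = ∑ i ∈ r.index,
      antipode (R := ℂ) (r.right i) ⊗ₜ[ℂ] antipode (R := ℂ) (r.left i) := by
  simp [antipodeFlip, ← r.eq, map_sum]

lemma conv_d₁_d₂ : conv (d₁ (A := A)) d₂ = Coalgebra.comul := by
  refine LinearMap.ext fun a => ?_
  rw [conv_repr _ _ (ℛ ℂ a)]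
  simp [Algebra.TensorProduct.tmul_mul_tmul, (ℛ ℂ a).eq]

lemma conv_p_q :
    conv (d₂ ∘ₗ antipode (R := ℂ) (A := A)) (d₁ ∘ₗ antipode (R := ℂ)) = antipodeFlip := by
  refine LinearMap.ext fun a => ?_
  rw [conv_repr _ _ (ℛ ℂ a), antipodeFlip_repr (ℛ ℂ a)]
  simp [Algebra.TensorProduct.tmul_mul_tmul]

lemma conv_q_d₁ : conv (d₁ ∘ₗ antipode (R := ℂ) (A := A)) d₁ = cunit := by
  refine LinearMap.ext fun a => ?_
  rw [conv_repr _ _ (ℛ ℂ a)]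
  simp only [LinearMap.coe_comp, Function.comp_apply, d₁_apply,
    Algebra.TensorProduct.tmul_mul_tmul, one_mul]
  rw [← TensorProduct.sum_tmul, sum_antipode_mul_eq_algebraMap_counit (ℛ ℂ a), cunit_apply,
    Algebra.TensorProduct.algebraMap_apply]

lemma conv_p_d₂ : conv (d₂ ∘ₗ antipode (R := ℂ) (A := A)) d₂ = cunit := by
  refine LinearMap.ext fun a => ?_
  rw [conv_repr _ _ (ℛ ℂ a)]
  simp only [LinearMap.coe_comp, Function.comp_apply, d₂_apply,
    Algebra.TensorProduct.tmul_mul_tmul, one_mul]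
  rw [← TensorProduct.tmul_sum, sum_antipode_mul_eq_algebraMap_counit (ℛ ℂ a), cunit_apply]
  rw [Algebra.TensorProduct.algebraMap_apply, Algebra.algebraMap_eq_smul_one,
    TensorProduct.tmul_smul, TensorProduct.smul_tmul']

lemma conv_flip_comul : conv (antipodeFlip (A := A)) Coalgebra.comul = cunit := by
  rw [← conv_p_q, ← conv_d₁_d₂, conv_assoc, ← conv_assoc (d₁ ∘ₗ antipode (R := ℂ)),
    conv_q_d₁, cunit_conv, conv_p_d₂]

lemma conv_comul_comulS :
    conv (Coalgebra.comul (R := ℂ) (A := A)) (Coalgebra.comul ∘ₗ antipode (R := ℂ)) = cunit := by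
  refine LinearMap.ext fun a => ?_
  rw [conv_repr _ _ (ℛ ℂ a)]
  simp only [LinearMap.coe_comp, Function.comp_apply]
  simp_rw [← Bialgebra.comul_mul, ← map_sum, sum_mul_antipode_eq_algebraMap_counit (ℛ ℂ a),
    Bialgebra.comul_algebraMap, cunit_apply]

theorem comul_antipode :
    (Coalgebra.comul (R := ℂ) (A := A)) ∘ₗ antipode (R := ℂ) = antipodeFlip :=
  (eq_of_conv _ _ _ conv_flip_comul conv_comul_comulS).symm

theorem comul_antipode_apply (a : A) :
    Coalgebra.comul (R := ℂ) (antipode (R := ℂ) a) = antipodeFlip a :=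
  LinearMap.congr_fun comul_antipode a

end Stmt4Aux

namespace Stmt4Aux

variable {A : Type*} [Ring A] [HopfAlgebra ℂ A]

lemma counit_antipode (a : A) :
    counit (R := ℂ) (antipode (R := ℂ) a) = counit (R := ℂ) a := by
  set r := ℛ ℂ a with hr
  have h1 : counit (R := ℂ) (antipode (R := ℂ) a) =
      ∑ i ∈ r.index, counit (R := ℂ) (r.right i) *
        counit (R := ℂ) (antipode (R := ℂ) (r.left i)) := by
    conv_lhs => rw [← sum_smul_counit r]
    simp [map_sum, mul_comm]
  have h2 := congrArg (Coalgebra.counit (R := ℂ) (A := A)) (sum_antipode_mul_eq_algebraMap_counit (R := ℂ) r)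
  simp only [map_sum, Bialgebra.counit_mul, Bialgebra.counit_algebraMap] at h2
  rw [h1, ← h2]
  exact Finset.sum_congr rfl fun i _ => mul_comm _ _

/-- With `S² = id`, the antipode is also a "right antipode" in the flipped sense:
`∑ S(a₂) a₁ = ε(a) 1`. -/
lemma sum_antipode_right_mul_left (hS : ∀ x : A, antipode (R := ℂ) (antipode (R := ℂ) x) = x)
    {a : A} (r : Coalgebra.Repr ℂ a (A × A)) :
    ∑ i ∈ r.index, antipode (R := ℂ) (r.right i) * r.left i =
      algebraMap ℂ A (counit (R := ℂ) a) := by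
  set M : A ⊗[ℂ] A →ₗ[ℂ] A := LinearMap.mul' ℂ A ∘ₗ
    TensorProduct.map (antipode (R := ℂ)) LinearMap.id ∘ₗ
    (TensorProduct.comm ℂ A A).toLinearMap with hM
  have hMa : M (Coalgebra.comul a) = ∑ i ∈ r.index,
      antipode (R := ℂ) (r.right i) * r.left i := by
    rw [← r.eq]; simp [hM, map_sum]
  set rb := ℛ ℂ (antipode (R := ℂ) a) with hrb
  have hcom : Coalgebra.comul (R := ℂ) a = ∑ i ∈ rb.index,
      antipode (R := ℂ) (rb.right i) ⊗ₜ[ℂ] antipode (R := ℂ) (rb.left i) := by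
    conv_lhs => rw [← hS a, comul_antipode_apply, antipodeFlip_repr rb]
  have hMb : M (Coalgebra.comul a) = algebraMap ℂ A (counit (R := ℂ) a) := by
    rw [hcom, map_sum]
    have : ∀ i ∈ rb.index, M (antipode (R := ℂ) (rb.right i) ⊗ₜ[ℂ]
        antipode (R := ℂ) (rb.left i)) = rb.left i * antipode (R := ℂ) (rb.right i) := by
      intro i _
      simp [hM, hS]
    rw [Finset.sum_congr rfl this, sum_mul_antipode_eq_algebraMap_counit (R := ℂ) rb, counit_antipode]
  rw [← hMa, hMb]

end Stmt4Aux

namespace Stmt4Aux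

variable {A V : Type*} [Ring A] [HopfAlgebra ℂ A] [AddCommGroup V] [Module ℂ V]
  (π : A →ₐ[ℂ] Module.End ℂ V) (φ₀ : V)

@[simp] lemma actOn_apply (a : A) : actOn π φ₀ a = π a φ₀ := rfl

/-- `b ⊗ v ↦ π (S b) v`. -/
noncomputable def actS : A ⊗[ℂ] V →ₗ[ℂ] V :=
  TensorProduct.lift ((π.toLinearMap : A →ₗ[ℂ] V →ₗ[ℂ] V) ∘ₗ antipode (R := ℂ))

@[simp] lemma actS_tmul (b : A) (v : V) : actS π (b ⊗ₜ[ℂ] v) = π (antipode (R := ℂ) b) v := rfl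

/-- `v ⊗ (b ⊗ c) ↦ S c ⊗ π (S b) v`. -/
noncomputable def Gmap : V ⊗[ℂ] (A ⊗[ℂ] A) →ₗ[ℂ] A ⊗[ℂ] V :=
  TensorProduct.map (antipode (R := ℂ)) (actS π) ∘ₗ
    (TensorProduct.leftComm ℂ A A V).toLinearMap ∘ₗ
    (TensorProduct.assoc ℂ A A V).toLinearMap ∘ₗ
    (TensorProduct.comm ℂ V (A ⊗[ℂ] A)).toLinearMap

@[simp] lemma Gmap_tmul (v : V) (b c : A) :
    Gmap π (v ⊗ₜ[ℂ] (b ⊗ₜ[ℂ] c)) =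
      antipode (R := ℂ) c ⊗ₜ[ℂ] π (antipode (R := ℂ) b) v := by
  simp [Gmap]

end Stmt4Aux

namespace Stmt4Aux

variable {A V : Type*} [Ring A] [HopfAlgebra ℂ A] [AddCommGroup V] [Module ℂ V]
  (π : A →ₐ[ℂ] Module.End ℂ V) (φ₀ : V)

/-- `(b ⊗ c) ⊗ v ↦ π (S c) v ⊗ S b`. -/
noncomputable def Gmap' : (A ⊗[ℂ] A) ⊗[ℂ] V →ₗ[ℂ] V ⊗[ℂ] A :=
  (TensorProduct.comm ℂ A V).toLinearMap ∘ₗ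
    TensorProduct.map (antipode (R := ℂ)) (actS π) ∘ₗ
    (TensorProduct.assoc ℂ A A V).toLinearMap

@[simp] lemma Gmap'_tmul (v : V) (b c : A) :
    Gmap' π ((b ⊗ₜ[ℂ] c) ⊗ₜ[ℂ] v) =
      π (antipode (R := ℂ) c) v ⊗ₜ[ℂ] antipode (R := ℂ) b := by
  simp [Gmap']

lemma main_left_to_right (hS : ∀ x : A, antipode (R := ℂ) (antipode (R := ℂ) x) = x)
    {a : A}
    (ha : TensorProduct.map (actOn π φ₀) LinearMap.id (Coalgebra.comul a) = φ₀ ⊗ₜ[ℂ] a) :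
    TensorProduct.map LinearMap.id (actOn π φ₀)
      (Coalgebra.comul (antipode (R := ℂ) a)) = antipode (R := ℂ) a ⊗ₜ[ℂ] φ₀ := by
  classical
  set r := ℛ ℂ a with hr
  set s : ∀ i, Coalgebra.Repr ℂ (r.left i) (A × A) := fun i => ℛ ℂ (r.left i) with hs
  set t : ∀ i, Coalgebra.Repr ℂ (r.right i) (A × A) := fun i => ℛ ℂ (r.right i) with ht
  -- the hypothesis in summed form
  rw [← r.eq, map_sum] at ha
  simp only [TensorProduct.map_tmul, actOn_apply, LinearMap.id_coe, id_eq] at ha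
  -- Step 1 : rewrite the goal LHS
  have step1 : TensorProduct.map LinearMap.id (actOn π φ₀)
      (Coalgebra.comul (antipode (R := ℂ) a)) =
      ∑ i ∈ r.index, antipode (R := ℂ) (r.right i) ⊗ₜ[ℂ]
        π (antipode (R := ℂ) (r.left i)) φ₀ := by
    rw [comul_antipode_apply, antipodeFlip_repr r, map_sum]
    simp
  -- Step 2 : push `comul` into the hypothesis and apply `Gmap`
  have h2 := congrArg
    (fun x => Gmap π (LinearMap.lTensor V (Coalgebra.comul (R := ℂ) (A := A)) x)) ha
  simp only [map_sum, LinearMap.lTensor_tmul] at h2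
  have h2l : ∀ i ∈ r.index, Gmap π (π (r.left i) φ₀ ⊗ₜ[ℂ] Coalgebra.comul (r.right i)) =
      ∑ j ∈ (t i).index, antipode (R := ℂ) ((t i).right j) ⊗ₜ[ℂ]
        π (antipode (R := ℂ) ((t i).left j)) (π (r.left i) φ₀) := by
    intro i _
    rw [← (t i).eq, TensorProduct.tmul_sum, map_sum]
    simp
  have h2r : Gmap π (φ₀ ⊗ₜ[ℂ] Coalgebra.comul (R := ℂ) a) =
      ∑ i ∈ r.index, antipode (R := ℂ) (r.right i) ⊗ₜ[ℂ]
        π (antipode (R := ℂ) (r.left i)) φ₀ := by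
    rw [← r.eq, TensorProduct.tmul_sum, map_sum]
    simp
  rw [Finset.sum_congr rfl h2l, h2r] at h2
  -- Step 3 : coassociativity
  have h3 := congrArg (⇑(Gmap π ∘ₗ TensorProduct.map (actOn π φ₀)
      (LinearMap.id : A ⊗[ℂ] A →ₗ[ℂ] A ⊗[ℂ] A))) (Coalgebra.sum_tmul_tmul_eq r s t)
  simp only [map_sum, LinearMap.coe_comp, Function.comp_apply, TensorProduct.map_tmul,
    actOn_apply, LinearMap.id_coe, id_eq, Gmap_tmul] at h3
  -- Step 4 : evaluate the left-hand side of h3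
  have h4 : ∀ i ∈ r.index, ∑ j ∈ (s i).index, antipode (R := ℂ) (r.right i) ⊗ₜ[ℂ]
      π (antipode (R := ℂ) ((s i).right j)) (π ((s i).left j) φ₀) =
      counit (R := ℂ) (r.left i) • (antipode (R := ℂ) (r.right i) ⊗ₜ[ℂ] φ₀) := by
    intro i _
    rw [← TensorProduct.tmul_sum]
    have hinner : ∑ j ∈ (s i).index,
        π (antipode (R := ℂ) ((s i).right j)) (π ((s i).left j) φ₀) =
        counit (R := ℂ) (r.left i) • φ₀ := by
      have := congrArg (fun x => π x φ₀) (sum_antipode_right_mul_left hS (s i))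
      simp only [map_sum, map_mul, LinearMap.sum_apply, Module.End.mul_apply] at this
      rw [this, AlgHom.commutes, Module.algebraMap_end_apply]
    rw [hinner, TensorProduct.tmul_smul]
  rw [Finset.sum_congr rfl h4] at h3
  -- conclude
  rw [step1, ← h2, ← h3]
  simp_rw [TensorProduct.smul_tmul', ← TensorProduct.sum_tmul, ← map_smul, ← map_sum,
    sum_counit_smul]

end Stmt4Aux

namespace Stmt4Aux

variable {A V : Type*} [Ring A] [HopfAlgebra ℂ A] [AddCommGroup V] [Module ℂ V]
  (π : A →ₐ[ℂ] Module.End ℂ V) (φ₀ : V)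

lemma main_right_to_left {a : A}
    (ha : TensorProduct.map LinearMap.id (actOn π φ₀) (Coalgebra.comul a) = a ⊗ₜ[ℂ] φ₀) :
    TensorProduct.map (actOn π φ₀) LinearMap.id
      (Coalgebra.comul (antipode (R := ℂ) a)) = φ₀ ⊗ₜ[ℂ] antipode (R := ℂ) a := by
  classical
  set r := ℛ ℂ a with hr
  set s : ∀ i, Coalgebra.Repr ℂ (r.left i) (A × A) := fun i => ℛ ℂ (r.left i) with hs
  set t : ∀ i, Coalgebra.Repr ℂ (r.right i) (A × A) := fun i => ℛ ℂ (r.right i) with ht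
  rw [← r.eq, map_sum] at ha
  simp only [TensorProduct.map_tmul, actOn_apply, LinearMap.id_coe, id_eq] at ha
  have step1 : TensorProduct.map (actOn π φ₀) LinearMap.id
      (Coalgebra.comul (antipode (R := ℂ) a)) =
      ∑ i ∈ r.index, π (antipode (R := ℂ) (r.right i)) φ₀ ⊗ₜ[ℂ]
        antipode (R := ℂ) (r.left i) := by
    rw [comul_antipode_apply, antipodeFlip_repr r, map_sum]
    simp
  have h2 := congrArg
    (fun x => Gmap' π (LinearMap.rTensor V (Coalgebra.comul (R := ℂ) (A := A)) x)) ha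
  simp only [map_sum, LinearMap.rTensor_tmul] at h2
  have h2l : ∀ i ∈ r.index, Gmap' π (Coalgebra.comul (r.left i) ⊗ₜ[ℂ] π (r.right i) φ₀) =
      ∑ j ∈ (s i).index, π (antipode (R := ℂ) ((s i).right j)) (π (r.right i) φ₀) ⊗ₜ[ℂ]
        antipode (R := ℂ) ((s i).left j) := by
    intro i _
    rw [← (s i).eq, TensorProduct.sum_tmul, map_sum]
    simp
  have h2r : Gmap' π (Coalgebra.comul (R := ℂ) a ⊗ₜ[ℂ] φ₀) =
      ∑ i ∈ r.index, π (antipode (R := ℂ) (r.right i)) φ₀ ⊗ₜ[ℂ]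
        antipode (R := ℂ) (r.left i) := by
    rw [← r.eq, TensorProduct.sum_tmul, map_sum]
    simp
  rw [Finset.sum_congr rfl h2l, h2r] at h2
  have h3 := congrArg (⇑(Gmap' π ∘ₗ
      TensorProduct.map (LinearMap.id : A ⊗[ℂ] A →ₗ[ℂ] A ⊗[ℂ] A) (actOn π φ₀) ∘ₗ
      (TensorProduct.assoc ℂ A A A).symm.toLinearMap)) (Coalgebra.sum_tmul_tmul_eq r s t)
  simp only [map_sum, LinearMap.coe_comp, Function.comp_apply, LinearEquiv.coe_coe,
    TensorProduct.assoc_symm_tmul, TensorProduct.map_tmul, actOn_apply, LinearMap.id_coe,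
    id_eq, Gmap'_tmul] at h3
  have h4 : ∀ i ∈ r.index, ∑ j ∈ (t i).index,
      π (antipode (R := ℂ) ((t i).left j)) (π ((t i).right j) φ₀) ⊗ₜ[ℂ]
        antipode (R := ℂ) (r.left i) =
      counit (R := ℂ) (r.right i) • (φ₀ ⊗ₜ[ℂ] antipode (R := ℂ) (r.left i)) := by
    intro i _
    rw [← TensorProduct.sum_tmul]
    have hinner : ∑ j ∈ (t i).index,
        π (antipode (R := ℂ) ((t i).left j)) (π ((t i).right j) φ₀) =
        counit (R := ℂ) (r.right i) • φ₀ := by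
      have := congrArg (fun x => π x φ₀) (sum_antipode_mul_eq_algebraMap_counit (R := ℂ) (t i))
      simp only [map_sum, map_mul, LinearMap.sum_apply, Module.End.mul_apply] at this
      rw [this, AlgHom.commutes, Module.algebraMap_end_apply]
    rw [hinner, TensorProduct.smul_tmul']
  rw [Finset.sum_congr rfl h4] at h3
  rw [step1, ← h2, h3]
  simp_rw [← TensorProduct.tmul_smul, ← TensorProduct.tmul_sum, ← map_smul, ← map_sum,
    sum_smul_counit]

end Stmt4Aux

end Stmt4AuxSection

/-- for a finite-dimensional Hopf algebra with `S² = id`,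
the antipode exchanges the left and right residual symmetry algebras. -/
theorem stmt4 {A V : Type*} [Ring A] [HopfAlgebra ℂ A] [FiniteDimensional ℂ A]
    [AddCommGroup V] [Module ℂ V]
    (hS : ∀ a : A, HopfAlgebra.antipode (R := ℂ) (HopfAlgebra.antipode (R := ℂ) a) = a)
    (π : A →ₐ[ℂ] Module.End ℂ V) (φ₀ : V) :
    HopfAlgebra.antipode (R := ℂ) '' leftResidual π φ₀ = rightResidual π φ₀ ∧
    HopfAlgebra.antipode (R := ℂ) '' rightResidual π φ₀ = leftResidual π φ₀ := by
  classical
  have h1 : ∀ a ∈ leftResidual π φ₀, HopfAlgebra.antipode (R := ℂ) a ∈ rightResidual π φ₀ :=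
    fun a ha => Stmt4Aux.main_left_to_right π φ₀ hS ha
  have h2 : ∀ a ∈ rightResidual π φ₀, HopfAlgebra.antipode (R := ℂ) a ∈ leftResidual π φ₀ :=
    fun a ha => Stmt4Aux.main_right_to_left π φ₀ ha
  constructor
  · ext b
    constructor
    · rintro ⟨a, ha, rfl⟩
      exact h1 a ha
    · intro hb
      exact ⟨HopfAlgebra.antipode (R := ℂ) b, h2 b hb, hS b⟩
  · ext b
    constructor
    · rintro ⟨a, ha, rfl⟩
      exact h2 a ha
    · intro hb
      exact ⟨HopfAlgebra.antipode (R := ℂ) b, h1 b hb, hS b⟩
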